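/- Let g : ℝ → ℝ be defined by g(x) = |x| + log(1 + |x|), and for a function w : ℝ → ℝ let Δ_w(x, y) := 2·w(x) + w(y) − w(2x + y). Then Δ_g(x, y) ≥ λ(|x|) for all (x, y) ∈ ℝ², where λ(z) = 2·log(1 + z) − log(1 + 2z). -/

import Mathlib

theorem Delta_g_ge_lambda (g : ℝ → ℝ) (hg : ∀ x : ℝ, g x = |x| + Real.log (1 + |x|))
    (Δg : ℝ → ℝ → ℝ) (hΔ : ∀ x y : ℝ, Δg x y = 2 * g x + g y - g (2 * x + y))
    (lam : ℝ → ℝ) (hlam : ∀ z : ℝ, lam z = 2 * Real.log (1 + z) - Real.log (1 + 2 * z)) :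
    ∀ x y : ℝ, Δg x y ≥ lam |x| := by
  intro x y
  rw [hΔ, hg, hg, hg, hlam]
  set a := |x| with ha
  set b := |y| with hb
  set c := |2 * x + y| with hc
  have ha0 : 0 ≤ a := abs_nonneg x
  have hb0 : 0 ≤ b := abs_nonneg y
  have hc0 : 0 ≤ c := abs_nonneg _
  have htri : c ≤ 2 * a + b := by
    calc c ≤ |2 * x| + |y| := abs_add_le _ _
    _ = 2 * a + b := by rw [abs_mul]; norm_num [ha, hb]
  have hlog : Real.log (1 + c) ≤ Real.log (1 + b) + Real.log (1 + 2 * a) := by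
    rw [← Real.log_mul (by linarith) (by linarith)]
    apply Real.log_le_log (by linarith)
    nlinarith
  linarith
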